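/- Let A be a unital C*-algebra, H a complex Hilbert space, P ∈ B(H) positive, and Φ ∈ CP^{(P)}(A,B(H)). Then the following are equivalent: (i) Φ is a P-C*-extreme point of CP^{(P)}(A,B(H)); (ii) for every CP map Ψ : A → B(H) with Ψ ≤_cp Φ and Ψ(1) = B* P B for some invertible B ∈ B(H), there exists an invertible Z ∈ B(H) such that Ψ = Ad_Z∘Φ. -/

import Mathlib

open scoped ComplexOrder

noncomputable section

section Defs

variable {A H : Type*}
variable [NormedAddCommGroup H] [InnerProductSpace ℂ H]

/-- An operator on a complex inner product space is positive:
`0 ≤ ⟪x, T x⟫` for all `x`. -/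
def IsPosOp (T : H →L[ℂ] H) : Prop := ∀ x : H, 0 ≤ (inner ℂ x (T x) : ℂ)

variable [Ring A] [StarRing A] [Algebra ℂ A]

/-- Complete positivity of a linear map `Φ : A → B(H)`:
`∑_{i,j} ⟪h i, Φ(a i* a j) (h j)⟫ ≥ 0` for all finite families. -/
def IsCPMap (Φ : A →ₗ[ℂ] (H →L[ℂ] H)) : Prop :=
  ∀ (n : ℕ) (a : Fin n → A) (h : Fin n → H),
    0 ≤ ∑ i, ∑ j, (inner ℂ (h i) ((Φ (star (a i) * a j)) (h j)) : ℂ)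

/-- `CP^{(P)}(A, B(H))`: the CP maps `Φ` with `Φ 1 = P`. -/
def CPP (P : H →L[ℂ] H) : Set (A →ₗ[ℂ] (H →L[ℂ] H)) := {Φ | IsCPMap Φ ∧ Φ 1 = P}

/-- `CCP(A, B(H))`: the contractive CP maps, i.e. CP maps with `Φ 1 ≤ 1`. -/
def CCPmaps : Set (A →ₗ[ℂ] (H →L[ℂ] H)) := {Φ | IsCPMap Φ ∧ IsPosOp (1 - Φ 1)}

variable [CompleteSpace H]

/-- `Ad_T : X ↦ T* X T`, as a linear map on `B(H)`. -/
def conjAd (T : H →L[ℂ] H) : (H →L[ℂ] H) →ₗ[ℂ] (H →L[ℂ] H) where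
  toFun X := star T * X * T
  map_add' X Y := by simp [add_mul, mul_add]
  map_smul' c X := by simp [mul_smul_comm, smul_mul_assoc]

/-- `Φ ∈ CP^{(P)}` is a `P`-`C*`-extreme point of `CP^{(P)}(A, B(H))`:
whenever `Φ = ∑ Ad_{T j} ∘ Φs j` is a proper `P`-`C*`-convex combination of members of
`CP^{(P)}`, each `Φs j` equals `Ad_{S j} ∘ Φ` for some invertible `S j`. -/
def IsPCExtreme (P : H →L[ℂ] H) (Φ : A →ₗ[ℂ] (H →L[ℂ] H)) : Prop :=
  Φ ∈ CPP (A := A) P ∧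
  ∀ (n : ℕ) (T : Fin n → (H →L[ℂ] H)) (Φs : Fin n → (A →ₗ[ℂ] (H →L[ℂ] H))),
    (∀ j, IsUnit (T j)) → (∀ j, Φs j ∈ CPP (A := A) P) →
    (∑ j, star (T j) * P * T j) = P →
    Φ = ∑ j, (conjAd (T j)).comp (Φs j) →
    ∀ j, ∃ S : H →L[ℂ] H, IsUnit S ∧ Φs j = (conjAd S).comp Φ

/-- `Φ ∈ C` is a `C*`-extreme point of the `C*`-convex set `C`:
whenever `Φ = ∑ Ad_{T j} ∘ Φs j` is a proper `C*`-convex combination of members of `C`,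
each `Φs j` is unitarily equivalent to `Φ`. -/
def IsCstarExtreme (C : Set (A →ₗ[ℂ] (H →L[ℂ] H))) (Φ : A →ₗ[ℂ] (H →L[ℂ] H)) : Prop :=
  Φ ∈ C ∧
  ∀ (n : ℕ) (T : Fin n → (H →L[ℂ] H)) (Φs : Fin n → (A →ₗ[ℂ] (H →L[ℂ] H))),
    (∀ j, IsUnit (T j)) → (∀ j, Φs j ∈ C) →
    (∑ j, star (T j) * T j) = 1 →
    Φ = ∑ j, (conjAd (T j)).comp (Φs j) →
    ∀ j, ∃ U : H →L[ℂ] H, U ∈ unitary (H →L[ℂ] H) ∧ Φs j = (conjAd U).comp Φ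

/-- `Φ ∈ C` is a linear extreme point of the convex set `C`. -/
def IsLinExtreme (C : Set (A →ₗ[ℂ] (H →L[ℂ] H))) (Φ : A →ₗ[ℂ] (H →L[ℂ] H)) : Prop :=
  Φ ∈ C ∧
  ∀ (n : ℕ) (t : Fin n → ℝ) (Φs : Fin n → (A →ₗ[ℂ] (H →L[ℂ] H))),
    (∀ j, 0 < t j ∧ t j < 1) → (∀ j, Φs j ∈ C) → (∑ j, t j) = 1 →
    Φ = ∑ j, (t j : ℂ) • Φs j →
    ∀ j, Φs j = Φ

end Defs

section AuxOps
variable {H : Type*} [NormedAddCommGroup H] [InnerProductSpace ℂ H] [CompleteSpace H]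



lemma isPosOp_iff_nonneg (T : H →L[ℂ] H) : IsPosOp T ↔ 0 ≤ T := by
  rw [ContinuousLinearMap.nonneg_iff_isPositive, ContinuousLinearMap.isPositive_iff_complex]
  constructor
  · intro hT x
    have hx := hT x
    have hc : (inner ℂ (T x) x : ℂ) = starRingEnd ℂ (inner ℂ x (T x) : ℂ) := (inner_conj_symm _ _).symm
    rw [Complex.nonneg_iff] at hx
    have hreal : (inner ℂ x (T x) : ℂ) = (((inner ℂ x (T x) : ℂ).re : ℝ) : ℂ) := by
      apply Complex.ext
      · simp
      · simp [← hx.2]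
    constructor
    · rw [hc, hreal, Complex.conj_ofReal]
      simp
    · rw [hc, hreal, Complex.conj_ofReal]
      simpa using hx.1
  · intro hT x
    have hx := hT x
    have hc : (inner ℂ x (T x) : ℂ) = starRingEnd ℂ (inner ℂ (T x) x : ℂ) := (inner_conj_symm _ _).symm
    rw [hc, ← hx.1, Complex.conj_ofReal]
    exact Complex.zero_le_real.mpr hx.2

lemma range_orth_eq_ker (S : H →L[ℂ] H) (hS : IsSelfAdjoint S) :
    (S.range)ᗮ = S.ker := by
  have hadj : ContinuousLinearMap.adjoint S = S := by
    rwa [← ContinuousLinearMap.star_eq_adjoint]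
  ext z
  simp only [Submodule.mem_orthogonal, LinearMap.mem_range, LinearMap.mem_ker,
    forall_exists_index, ContinuousLinearMap.coe_coe]
  constructor
  · intro hz
    have h1 := hz (S (S z)) (S z) rfl
    rw [show S (S z) = ContinuousLinearMap.adjoint S (S z) by rw [hadj],
      ContinuousLinearMap.adjoint_inner_left] at h1
    exact inner_self_eq_zero.mp h1
  · intro h0 u w hw
    subst hw
    rw [show S w = ContinuousLinearMap.adjoint S w by rw [hadj],
      ContinuousLinearMap.adjoint_inner_left, h0, inner_zero_right]


lemma exists_extension (S T : H →L[ℂ] H) (c : ℝ)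
    (hb : ∀ x, ‖T x‖ ≤ c * ‖S x‖) :
    ∃ D : H →L[ℂ] H, (∀ x, D (S x) = T x) ∧
      (∀ y, D y ∈ (T.range).topologicalClosure) ∧
      (∀ y ∈ ((S.range : Submodule ℂ H).topologicalClosure)ᗮ, D y = 0) := by
  classical
  have hw : ∀ x y : H, S x = S y → T x = T y := by
    intro x y hxy
    have h1 : ‖T x - T y‖ ≤ c * ‖S x - S y‖ := by
      have := hb (x - y); simpa [map_sub] using this
    rw [hxy, sub_self, norm_zero, mul_zero] at h1
    have h2 : ‖T x - T y‖ = 0 := le_antisymm h1 (norm_nonneg _)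
    rwa [norm_eq_zero, sub_eq_zero] at h2
  set p : Submodule ℂ H := S.range with hp
  have hmem : ∀ y : p, ∃ x : H, S x = (y : H) := fun y => LinearMap.mem_range.mp y.2
  set pick : p → H := fun y => (hmem y).choose with hpickdef
  have hpick : ∀ y : p, S (pick y) = (y : H) := fun y => (hmem y).choose_spec
  have hTpick : ∀ (y : p) (x : H), S x = (y : H) → T x = T (pick y) := by
    intro y x hx
    exact hw _ _ (by rw [hx, hpick])
  set f : p →ₗ[ℂ] H :=
    { toFun := fun y => T (pick y)
      map_add' := by
        intro y z
        have hS : S (pick y + pick z) = ((y + z : p) : H) := by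
          rw [map_add, hpick, hpick]; rfl
        show T (pick (y + z)) = T (pick y) + T (pick z)
        rw [← hTpick (y + z) _ hS, map_add]
      map_smul' := by
        intro m y
        have hS : S (m • pick y) = ((m • y : p) : H) := by
          rw [map_smul, hpick]; rfl
        show T (pick (m • y)) = (RingHom.id ℂ) m • T (pick y)
        rw [← hTpick (m • y) _ hS, map_smul]
        rfl } with hfdef
  have hfS : ∀ x : H, f ⟨S x, LinearMap.mem_range_self (S : H →ₗ[ℂ] H) x⟩ = T x := by
    intro x
    exact (hTpick ⟨S x, LinearMap.mem_range_self (S : H →ₗ[ℂ] H) x⟩ x rfl).symm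
  have hbound : ∀ y : p, ‖f y‖ ≤ max c 0 * ‖y‖ := by
    intro y
    have h2 : ‖T (pick y)‖ ≤ c * ‖S (pick y)‖ := hb _
    rw [hpick] at h2
    have h3 : c * ‖(y : H)‖ ≤ max c 0 * ‖(y : H)‖ :=
      mul_le_mul_of_nonneg_right (le_max_left _ _) (norm_nonneg _)
    exact le_trans h2 h3
  set fc : p →L[ℂ] H := f.mkContinuous (max c 0) hbound with hfcdef
  set K : Submodule ℂ H := p.topologicalClosure with hK
  haveI : CompleteSpace K := p.isClosed_topologicalClosure.completeSpace_coe
  set e : p →L[ℂ] K := ContinuousLinearMap.codRestrict p.subtypeL K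
      (fun y => p.le_topologicalClosure y.2) with hedef
  have he_apply : ∀ y : p, ((e y : K) : H) = (y : H) := fun y => rfl
  have hiso : Isometry e :=
    AddMonoidHomClass.isometry_of_norm e (fun y => rfl)
  have hdense : DenseRange e := by
    intro z
    rw [closure_subtype]
    have himg : (Subtype.val '' Set.range e) = (p : Set H) := by
      ext v
      constructor
      · rintro ⟨w, ⟨y, rfl⟩, rfl⟩
        exact y.2
      · intro hv
        exact ⟨e ⟨v, hv⟩, ⟨⟨v, hv⟩, rfl⟩, rfl⟩
    rw [himg, ← Submodule.topologicalClosure_coe]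
    exact z.2
  set Dext : K →L[ℂ] H := fc.extend e with hDext
  set D : H →L[ℂ] H := Dext.comp (K.orthogonalProjectionOnto) with hDdef
  have hDS : ∀ x, D (S x) = T x := by
    intro x
    have hmemK : S x ∈ K := p.le_topologicalClosure (LinearMap.mem_range_self (S : H →ₗ[ℂ] H) x)
    have hproj : K.orthogonalProjectionOnto (S x) = e ⟨S x, LinearMap.mem_range_self (S : H →ₗ[ℂ] H) x⟩ := by
      apply Subtype.ext
      rw [he_apply]
      exact K.starProjection_eq_self_iff.mpr hmemK
    have : D (S x) = Dext (K.orthogonalProjectionOnto (S x)) := rfl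
    rw [this, hproj, ContinuousLinearMap.extend_eq (h_dense := hdense) (h_e := hiso.isUniformInducing)]
    exact hfS x
  have hDran : ∀ z : K, Dext z ∈ (T.range).topologicalClosure := by
    have hcl : IsClosed {z : K | Dext z ∈ (T.range).topologicalClosure} :=
      IsClosed.preimage Dext.continuous (T.range).isClosed_topologicalClosure
    intro z
    refine hdense.induction_on z hcl ?_
    intro y
    rw [ContinuousLinearMap.extend_eq (h_dense := hdense) (h_e := hiso.isUniformInducing)]
    have : fc y = T (pick y) := rfl
    rw [this]
    exact (T.range).le_topologicalClosure (LinearMap.mem_range_self (T : H →ₗ[ℂ] H) (pick y))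
  refine ⟨D, hDS, fun y => hDran _, ?_⟩
  intro y hy
  have hz : K.orthogonalProjectionOnto y = 0 :=
    Submodule.orthogonalProjectionOnto_apply_of_mem_orthogonal hy
  have : D y = Dext (K.orthogonalProjectionOnto y) := rfl
  rw [this, hz, map_zero]

set_option maxHeartbeats 1000000 in
set_option synthInstance.maxHeartbeats 1000000 in
lemma douglas_lemma (P R : H →L[ℂ] H) (hP : IsPosOp P) (hR : IsPosOp R)
    (hRP : IsPosOp (P - R)) (hPR : IsPosOp ((2 : ℂ) • R - P)) :
    ∃ C : H →L[ℂ] H, IsUnit C ∧ star C * P * C = R := by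
  have hP0 : 0 ≤ P := (isPosOp_iff_nonneg P).mp hP
  have hR0 : 0 ≤ R := (isPosOp_iff_nonneg R).mp hR
  set S : H →L[ℂ] H := CFC.sqrt P with hSdef
  set T : H →L[ℂ] H := CFC.sqrt R with hTdef
  have hS0 : 0 ≤ S := CFC.sqrt_nonneg _
  have hT0 : 0 ≤ T := CFC.sqrt_nonneg _
  have hSsa : IsSelfAdjoint S := IsSelfAdjoint.of_nonneg hS0
  have hTsa : IsSelfAdjoint T := IsSelfAdjoint.of_nonneg hT0
  have hPsa : IsSelfAdjoint P := IsSelfAdjoint.of_nonneg hP0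
  have hSS : S * S = P := by rw [← pow_two]; exact CFC.sq_sqrt P hP0
  have hTT : T * T = R := by rw [← pow_two]; exact CFC.sq_sqrt R hR0
  have hSadj : ContinuousLinearMap.adjoint S = S := by
    rw [← ContinuousLinearMap.star_eq_adjoint]; exact hSsa
  have hTadj : ContinuousLinearMap.adjoint T = T := by
    rw [← ContinuousLinearMap.star_eq_adjoint]; exact hTsa
  -- quadratic form identities
  have hinnerS : ∀ x : H, (inner ℂ x (P x) : ℂ) = ((‖S x‖ : ℂ)) ^ 2 := by
    intro x
    rw [← hSS]
    have h1 : (S * S) x = S (S x) := rfl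
    rw [h1, show S (S x) = ContinuousLinearMap.adjoint S (S x) by rw [hSadj],
      ContinuousLinearMap.adjoint_inner_right, inner_self_eq_norm_sq_to_K]
    norm_cast
  have hinnerT : ∀ x : H, (inner ℂ x (R x) : ℂ) = ((‖T x‖ : ℂ)) ^ 2 := by
    intro x
    rw [← hTT]
    have h1 : (T * T) x = T (T x) := rfl
    rw [h1, show T (T x) = ContinuousLinearMap.adjoint T (T x) by rw [hTadj],
      ContinuousLinearMap.adjoint_inner_right, inner_self_eq_norm_sq_to_K]
    norm_cast
  -- norm inequalities
  have hsqle : ∀ x : H, ‖T x‖ ^ 2 ≤ ‖S x‖ ^ 2 := by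
    intro x
    have h1 := hRP x
    rw [ContinuousLinearMap.sub_apply, inner_sub_right, hinnerS, hinnerT] at h1
    have h2 : ((0 : ℂ)) ≤ (((‖S x‖ ^ 2 - ‖T x‖ ^ 2 : ℝ)) : ℂ) := by
      convert h1 using 1
      push_cast
      ring
    rw [Complex.zero_le_real] at h2
    linarith
  have hsqle2 : ∀ x : H, ‖S x‖ ^ 2 ≤ 2 * ‖T x‖ ^ 2 := by
    intro x
    have h1 := hPR x
    rw [ContinuousLinearMap.sub_apply, ContinuousLinearMap.smul_apply, inner_sub_right,
      inner_smul_right, hinnerS, hinnerT] at h1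
    have h2 : ((0 : ℂ)) ≤ (((2 * ‖T x‖ ^ 2 - ‖S x‖ ^ 2 : ℝ)) : ℂ) := by
      convert h1 using 1
      push_cast
      ring
    rw [Complex.zero_le_real] at h2
    linarith
  have hnorm1 : ∀ x : H, ‖T x‖ ≤ ‖S x‖ := by
    intro x
    have := Real.sqrt_le_sqrt (hsqle x)
    rwa [Real.sqrt_sq (norm_nonneg _), Real.sqrt_sq (norm_nonneg _)] at this
  have hnorm2 : ∀ x : H, ‖S x‖ ≤ 2 * ‖T x‖ := by
    intro x
    have h4 : ‖S x‖ ^ 2 ≤ (2 * ‖T x‖) ^ 2 := by nlinarith [sq_nonneg (‖T x‖), hsqle2 x]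
    have := Real.sqrt_le_sqrt h4
    rwa [Real.sqrt_sq (norm_nonneg _), Real.sqrt_sq (by positivity)] at this
  -- kernels and closures
  have hker : T.ker = S.ker := by
    ext z
    simp only [LinearMap.mem_ker, ContinuousLinearMap.coe_coe]
    constructor
    · intro h0
      have := hnorm2 z
      rw [h0, norm_zero, mul_zero] at this
      exact norm_le_zero_iff.mp this
    · intro h0
      have := hnorm1 z
      rw [h0, norm_zero] at this
      exact norm_le_zero_iff.mp this
  have hclos : (T.range).topologicalClosure
      = (S.range).topologicalClosure := by
    rw [← Submodule.orthogonal_orthogonal_eq_closure, ← Submodule.orthogonal_orthogonal_eq_closure,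
      range_orth_eq_ker S hSsa, range_orth_eq_ker T hTsa, hker]
  obtain ⟨D, hDS, hDran0, hD0⟩ := exists_extension S T 1 (fun x => by simpa using hnorm1 x)
  obtain ⟨E, hET, hEran0, hE00⟩ := exists_extension T S 2 hnorm2
  set K : Submodule ℂ H := (S.range).topologicalClosure with hKdef
  haveI : CompleteSpace K := (S.range).isClosed_topologicalClosure.completeSpace_coe
  have hDran : ∀ y, D y ∈ K := by intro y; have := hDran0 y; rwa [hclos] at this
  have hEran : ∀ y, E y ∈ K := fun y => hEran0 y
  have hE0 : ∀ y ∈ Kᗮ, E y = 0 := by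
    intro y hy
    refine hE00 y ?_
    rwa [hclos]
  set Qc : H →L[ℂ] H := K.subtypeL.comp (K.orthogonalProjectionOnto) with hQcdef
  have hQmem : ∀ y : H, Qc y ∈ K := fun y => (K.orthogonalProjectionOnto y).2
  have hQfix : ∀ y ∈ K, Qc y = y := by
    intro y hy
    exact K.starProjection_eq_self_iff.mpr hy
  have hQorth : ∀ y ∈ Kᗮ, Qc y = 0 := by
    intro y hy
    have hz : K.orthogonalProjectionOnto y = 0 :=
      Submodule.orthogonalProjectionOnto_apply_of_mem_orthogonal hy
    show K.subtypeL (K.orthogonalProjectionOnto y) = 0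
    rw [hz]; rfl
  have hQsa : IsSelfAdjoint Qc := isSelfAdjoint_starProjection K
  have hsub : ∀ y : H, y - Qc y ∈ Kᗮ := fun y => K.sub_starProjection_mem_orthogonal y
  -- operator identities
  have hQD : Qc * D = D := by
    ext y; exact hQfix _ (hDran y)
  have hQE : Qc * E = E := by
    ext y; exact hQfix _ (hEran y)
  have hDQ : D * Qc = D := by
    ext y
    have h1 := hD0 _ (hsub y)
    rw [map_sub] at h1
    exact (sub_eq_zero.mp h1).symm
  have hEQ : E * Qc = E := by
    ext y
    have h1 := hE0 _ (hsub y)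
    rw [map_sub] at h1
    exact (sub_eq_zero.mp h1).symm
  have hED : E * D = Qc := by
    ext y
    have hstep : ∀ z ∈ K, E (D z) = z := by
      have hclosed : IsClosed {z : H | E (D z) = z} :=
        isClosed_eq (E.continuous.comp D.continuous) continuous_id
      have hsubset : ((S.range : Submodule ℂ H) : Set H) ⊆ {z : H | E (D z) = z} := by
        rintro v ⟨x, rfl⟩
        show E (D (S x)) = S x
        rw [hDS, hET]
      intro z hz
      have : (K : Set H) ⊆ {z : H | E (D z) = z} := by
        rw [show (K : Set H) = closure ((S.range : Submodule ℂ H) : Set H) from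
          (Submodule.topologicalClosure_coe _)]
        exact closure_minimal hsubset hclosed
      exact this hz
    show E (D y) = Qc y
    have h1 : D y = D (Qc y) := by
      have h2 := hD0 _ (hsub y)
      rw [map_sub] at h2
      exact sub_eq_zero.mp h2
    rw [h1, hstep _ (hQmem y)]
  have hDE : D * E = Qc := by
    ext y
    have hstep : ∀ z ∈ K, D (E z) = z := by
      have hclosed : IsClosed {z : H | D (E z) = z} :=
        isClosed_eq (D.continuous.comp E.continuous) continuous_id
      have hsubset : ((T.range : Submodule ℂ H) : Set H) ⊆ {z : H | D (E z) = z} := by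
        rintro v ⟨x, rfl⟩
        show D (E (T x)) = T x
        rw [hET, hDS]
      intro z hz
      have : (K : Set H) ⊆ {z : H | D (E z) = z} := by
        rw [show (K : Set H) = ((T.range).topologicalClosure : Set H) by rw [hclos],
          show ((T.range).topologicalClosure : Set H)
            = closure ((T.range : Submodule ℂ H) : Set H) from
          (Submodule.topologicalClosure_coe _)]
        exact closure_minimal hsubset hclosed
      exact this hz
    show D (E y) = Qc y
    have h1 : E y = E (Qc y) := by
      have h2 := hE0 _ (hsub y)
      rw [map_sub] at h2
      exact sub_eq_zero.mp h2
    rw [h1, hstep _ (hQmem y)]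
  have hQQ : Qc * Qc = Qc := by
    ext y; exact hQfix _ (hQmem y)
  have hDSop : D * S = T := by ext y; exact hDS y
  have hETop : E * T = S := by ext y; exact hET y
  have hSQ : S * Qc = S := by
    ext y
    have hyk : y - Qc y ∈ (S.range)ᗮ :=
      (Submodule.orthogonal_le (Submodule.le_topologicalClosure _)) (hsub y)
    rw [range_orth_eq_ker S hSsa] at hyk
    have h1 : S (y - Qc y) = 0 := hyk
    rw [map_sub] at h1
    exact (sub_eq_zero.mp h1).symm
  have hQ1sa : star (1 - Qc) = 1 - Qc := by
    rw [star_sub, star_one, hQsa.star_eq]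
  -- the candidate unit
  set C : H →L[ℂ] H := star D + (1 - Qc) with hCdef
  set C' : H →L[ℂ] H := star E + (1 - Qc) with hC'def
  have e1 : star D * star E = Qc := by rw [← star_mul, hED, hQsa.star_eq]
  have e1' : star E * star D = Qc := by rw [← star_mul, hDE, hQsa.star_eq]
  have e2 : star D * (1 - Qc) = 0 := by
    have h1 : (1 - Qc) * D = 0 := by rw [sub_mul, one_mul, hQD, sub_self]
    calc star D * (1 - Qc) = star D * star (1 - Qc) := by rw [hQ1sa]
      _ = star ((1 - Qc) * D) := by rw [star_mul]
      _ = 0 := by rw [h1, star_zero]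
  have e2' : star E * (1 - Qc) = 0 := by
    have h1 : (1 - Qc) * E = 0 := by rw [sub_mul, one_mul, hQE, sub_self]
    calc star E * (1 - Qc) = star E * star (1 - Qc) := by rw [hQ1sa]
      _ = star ((1 - Qc) * E) := by rw [star_mul]
      _ = 0 := by rw [h1, star_zero]
  have e3 : (1 - Qc) * star E = 0 := by
    have h1 : E * (1 - Qc) = 0 := by rw [mul_sub, mul_one, hEQ, sub_self]
    calc (1 - Qc) * star E = star (1 - Qc) * star E := by rw [hQ1sa]
      _ = star (E * (1 - Qc)) := by rw [star_mul]
      _ = 0 := by rw [h1, star_zero]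
  have e3' : (1 - Qc) * star D = 0 := by
    have h1 : D * (1 - Qc) = 0 := by rw [mul_sub, mul_one, hDQ, sub_self]
    calc (1 - Qc) * star D = star (1 - Qc) * star D := by rw [hQ1sa]
      _ = star (D * (1 - Qc)) := by rw [star_mul]
      _ = 0 := by rw [h1, star_zero]
  have e4 : (1 - Qc) * (1 - Qc) = 1 - Qc := by
    rw [sub_mul, one_mul, mul_sub, mul_one, hQQ]
    abel
  have hCC' : C * C' = 1 := by
    rw [hCdef, hC'def, add_mul, mul_add, mul_add, e1, e2, e3, e4]
    abel
  have hC'C : C' * C = 1 := by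
    rw [hCdef, hC'def, add_mul, mul_add, mul_add, e1', e2', e3', e4]
    abel
  have hCunit : IsUnit C := ⟨⟨C, C', hCC', hC'C⟩, rfl⟩
  refine ⟨C, hCunit, ?_⟩
  have hstarC : star C = D + (1 - Qc) := by
    rw [hCdef, star_add, star_star, hQ1sa]
  have hPQ : P * Qc = P := by
    rw [← hSS, mul_assoc, hSQ]
  have f1 : P * (1 - Qc) = 0 := by rw [mul_sub, mul_one, hPQ, sub_self]
  have f2 : (1 - Qc) * P = 0 := by
    calc (1 - Qc) * P = star (1 - Qc) * star P := by rw [hQ1sa, hPsa.star_eq]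
      _ = star (P * (1 - Qc)) := by rw [star_mul]
      _ = 0 := by rw [f1, star_zero]
  have hSstarD : S * star D = T := by
    calc S * star D = star (D * star S) := by rw [star_mul, star_star]
      _ = star (D * S) := by rw [hSsa.star_eq]
      _ = T := by rw [hDSop, hTsa.star_eq]
  have f3 : D * P * star D = R := by
    rw [← hSS]
    calc D * (S * S) * star D = (D * S) * (S * star D) := by
          rw [mul_assoc, mul_assoc, mul_assoc]
      _ = T * T := by rw [hDSop, hSstarD]
      _ = R := hTT
  calc star C * P * C = (D + (1 - Qc)) * P * (star D + (1 - Qc)) := by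
        rw [hstarC, hCdef]
      _ = (D * P) * (star D + (1 - Qc)) := by rw [add_mul, f2, add_zero]
      _ = D * P * star D + D * (P * (1 - Qc)) := by rw [mul_add, mul_assoc D P (1 - Qc)]
      _ = R := by rw [f1, mul_zero, add_zero, f3]

lemma unit_conj_cancel (u : (H →L[ℂ] H)ˣ) (X : H →L[ℂ] H) :
    star (↑u⁻¹ : H →L[ℂ] H) * (star (↑u : H →L[ℂ] H) * X * ↑u) * ↑u⁻¹ = X := by
  calc star (↑u⁻¹ : H →L[ℂ] H) * (star (↑u : H →L[ℂ] H) * X * ↑u) * ↑u⁻¹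
      = (star (↑u⁻¹ : H →L[ℂ] H) * star (↑u : H →L[ℂ] H)) * X * ((↑u : H →L[ℂ] H) * ↑u⁻¹) := by
        simp only [mul_assoc]
    _ = X := by rw [← star_mul, Units.mul_inv, star_one, one_mul, mul_one]

lemma unit_conj_cancel' (u : (H →L[ℂ] H)ˣ) (X : H →L[ℂ] H) :
    star (↑u : H →L[ℂ] H) * (star (↑u⁻¹ : H →L[ℂ] H) * X * ↑u⁻¹) * ↑u = X := by
  have := unit_conj_cancel (u := u⁻¹) X
  rwa [inv_inv] at this

end AuxOps

section AuxCP

variable {A H : Type*} [NormedAddCommGroup H] [InnerProductSpace ℂ H]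
variable [Ring A] [StarRing A] [Algebra ℂ A]

lemma conjAd_apply [CompleteSpace H] (T X : H →L[ℂ] H) : conjAd T X = star T * X * T := rfl

lemma conjAd_conjAd [CompleteSpace H] (T V X : H →L[ℂ] H) :
    conjAd T (conjAd V X) = conjAd (V * T) X := by
  simp only [conjAd_apply, star_mul]
  simp only [mul_assoc]

lemma IsCPMap.addCP {Φ Ψ : A →ₗ[ℂ] (H →L[ℂ] H)} (hΦ : IsCPMap Φ) (hΨ : IsCPMap Ψ) :
    IsCPMap (Φ + Ψ) := by
  intro n a h
  have := add_nonneg (hΦ n a h) (hΨ n a h)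
  simpa [LinearMap.add_apply, ContinuousLinearMap.add_apply, inner_add_right,
    Finset.sum_add_distrib] using this

lemma IsCPMap.smulCP {Φ : A →ₗ[ℂ] (H →L[ℂ] H)} (c : ℝ) (hc : 0 ≤ c) (hΦ : IsCPMap Φ) :
    IsCPMap ((c : ℂ) • Φ) := by
  intro n a h
  have h0 : 0 ≤ (c : ℂ) := Complex.zero_le_real.mpr hc
  have h1 := mul_nonneg h0 (hΦ n a h)
  rw [Finset.mul_sum] at h1
  refine le_of_le_of_eq h1 ?_
  refine Finset.sum_congr rfl fun i _ => ?_
  rw [Finset.mul_sum]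
  refine Finset.sum_congr rfl fun j _ => ?_
  rw [LinearMap.smul_apply, ContinuousLinearMap.smul_apply, inner_smul_right]

lemma isCPMap_finsetSum {ι : Type*} (s : Finset ι) (Φ : ι → (A →ₗ[ℂ] (H →L[ℂ] H)))
    (hΦ : ∀ k ∈ s, IsCPMap (Φ k)) : IsCPMap (∑ k ∈ s, Φ k) := by
  intro n a h
  calc (0:ℂ) ≤ ∑ k ∈ s, ∑ i, ∑ j, (inner ℂ (h i) ((Φ k (star (a i) * a j)) (h j)) : ℂ) :=
        Finset.sum_nonneg fun k hk => hΦ k hk n a h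
    _ = _ := by
        rw [Finset.sum_comm]
        refine Finset.sum_congr rfl fun i _ => ?_
        rw [Finset.sum_comm]
        refine Finset.sum_congr rfl fun j _ => ?_
        simp [LinearMap.sum_apply, ContinuousLinearMap.sum_apply, inner_sum]

lemma IsCPMap.conjCP [CompleteSpace H] {Φ : A →ₗ[ℂ] (H →L[ℂ] H)} (hΦ : IsCPMap Φ)
    (T : H →L[ℂ] H) : IsCPMap ((conjAd T).comp Φ) := by
  intro n a h
  have := hΦ n a (fun i => T (h i))
  refine le_of_le_of_eq this ?_
  refine Finset.sum_congr rfl fun i _ => Finset.sum_congr rfl fun j _ => ?_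
  simp only [LinearMap.comp_apply, conjAd_apply, ContinuousLinearMap.mul_apply,
    ContinuousLinearMap.star_eq_adjoint, ContinuousLinearMap.adjoint_inner_right]

lemma IsCPMap.posOp_one {Φ : A →ₗ[ℂ] (H →L[ℂ] H)} (hΦ : IsCPMap Φ) : IsPosOp (Φ 1) := by
  intro x
  have := hΦ 1 (fun _ => 1) (fun _ => x)
  simpa using this

end AuxCP

set_option maxHeartbeats 2000000 in
set_option synthInstance.maxHeartbeats 1000000 in
/-- Theorem `thm-RNT-CP-P`. `Φ ∈ CP^{(P)}` is a `P`-`C*`-extreme point iff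
every CP map `Ψ ≤_cp Φ` with `Ψ(1) = B* P B` for some invertible `B` satisfies
`Ψ = Ad_Z ∘ Φ` for some invertible `Z`. -/
theorem stmt3 {A : Type*} [NormedRing A] [StarRing A] [CStarRing A] [NormedAlgebra ℂ A] [StarModule ℂ A] [CompleteSpace A]
    {H : Type*} [NormedAddCommGroup H] [InnerProductSpace ℂ H] [CompleteSpace H]
    (P : H →L[ℂ] H) (hP : IsPosOp P)
    (Φ : A →ₗ[ℂ] (H →L[ℂ] H)) (hΦ : Φ ∈ CPP (A := A) P) :
    IsPCExtreme P Φ ↔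
      ∀ Ψ : A →ₗ[ℂ] (H →L[ℂ] H), IsCPMap Ψ → IsCPMap (Φ - Ψ) →
        (∃ B : H →L[ℂ] H, IsUnit B ∧ Ψ 1 = star B * P * B) →
        ∃ Z : H →L[ℂ] H, IsUnit Z ∧ Ψ = (conjAd Z).comp Φ := by
  constructor
  · -- (i) → (ii)
    intro hext Ψ hΨcp hdiffcp hB
    obtain ⟨B, hBu, hΨ1⟩ := hB
    obtain ⟨b, hb⟩ := hBu
    set Q0 : H →L[ℂ] H := star B * P * B with hQ0def
    have hQ0pos : IsPosOp Q0 := by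
      intro x
      have h1 : Q0 x = (star B) (P (B x)) := rfl
      rw [h1, ContinuousLinearMap.star_eq_adjoint, ContinuousLinearMap.adjoint_inner_right]
      exact hP (B x)
    have hPQ0 : IsPosOp (P - Q0) := by
      have h1 := hdiffcp.posOp_one
      rwa [LinearMap.sub_apply, hΦ.2, hΨ1] at h1
    have hhalf : (0 : ℂ) ≤ (2 : ℂ)⁻¹ := by
      rw [show ((2 : ℂ)⁻¹) = (((2 : ℝ)⁻¹ : ℝ) : ℂ) by norm_num]
      exact Complex.zero_le_real.mpr (by norm_num)
    set R : H →L[ℂ] H := P - (2 : ℂ)⁻¹ • Q0 with hRdef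
    have hRpos : IsPosOp R := by
      intro x
      have hx := hPQ0 x
      rw [ContinuousLinearMap.sub_apply, inner_sub_right] at hx
      have e : (inner ℂ x (R x) : ℂ)
          = (inner ℂ x (P x) - inner ℂ x (Q0 x)) + (2 : ℂ)⁻¹ * inner ℂ x (Q0 x) := by
        rw [hRdef, ContinuousLinearMap.sub_apply, ContinuousLinearMap.smul_apply,
          inner_sub_right, inner_smul_right]
        ring
      rw [e]
      exact add_nonneg hx (mul_nonneg hhalf (hQ0pos x))
    have hPmR : IsPosOp (P - R) := by
      intro x
      have e : (inner ℂ x ((P - R) x) : ℂ) = (2 : ℂ)⁻¹ * inner ℂ x (Q0 x) := by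
        rw [hRdef]
        simp only [ContinuousLinearMap.sub_apply, ContinuousLinearMap.smul_apply,
          inner_sub_right, inner_smul_right]
        ring
      rw [e]
      exact mul_nonneg hhalf (hQ0pos x)
    have h2R : IsPosOp ((2 : ℂ) • R - P) := by
      intro x
      have hx := hPQ0 x
      rw [ContinuousLinearMap.sub_apply, inner_sub_right] at hx
      have e : (inner ℂ x (((2 : ℂ) • R - P) x) : ℂ) = inner ℂ x (P x) - inner ℂ x (Q0 x) := by
        rw [hRdef]
        simp only [ContinuousLinearMap.sub_apply, ContinuousLinearMap.smul_apply,
          inner_sub_right, inner_smul_right]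
        ring
      rw [e]
      exact hx
    obtain ⟨C, hCu, hCPC⟩ := douglas_lemma P R hP hRpos hPmR h2R
    obtain ⟨cu, hcu⟩ := hCu
    set γ : ℝ := (Real.sqrt 2)⁻¹ with hγdef
    have hγpos : 0 < γ := by
      rw [hγdef]
      have : (0:ℝ) < Real.sqrt 2 := Real.sqrt_pos.mpr (by norm_num)
      positivity
    have hγγ : (γ : ℂ) * (γ : ℂ) = (2 : ℂ)⁻¹ := by
      have h2 : Real.sqrt 2 * Real.sqrt 2 = 2 := Real.mul_self_sqrt (by norm_num)
      have hr : γ * γ = 2⁻¹ := by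
        rw [hγdef, ← mul_inv]
        rw [h2]
      calc (γ : ℂ) * (γ : ℂ) = ((γ * γ : ℝ) : ℂ) := by push_cast; ring
        _ = (2 : ℂ)⁻¹ := by rw [hr]; push_cast; norm_num
    have hγne : (γ : ℂ) ≠ 0 := Complex.ofReal_ne_zero.mpr (ne_of_gt hγpos)
    have hstarγ : star ((γ : ℝ) : ℂ) = ((γ : ℝ) : ℂ) := by
      rw [Complex.star_def, Complex.conj_ofReal]
    set Φ₁ : A →ₗ[ℂ] (H →L[ℂ] H) := (conjAd (↑b⁻¹ : H →L[ℂ] H)).comp Ψ with hΦ₁def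
    set Ψ2 : A →ₗ[ℂ] (H →L[ℂ] H) := Φ - (2 : ℂ)⁻¹ • Ψ with hΨ2def
    set Φ₂ : A →ₗ[ℂ] (H →L[ℂ] H) := (conjAd (↑cu⁻¹ : H →L[ℂ] H)).comp Ψ2 with hΦ₂def
    set Tv : Fin 2 → (H →L[ℂ] H) := ![(γ : ℂ) • B, C] with hTvdef
    set Φs : Fin 2 → (A →ₗ[ℂ] (H →L[ℂ] H)) := ![Φ₁, Φ₂] with hΦsdef
    have hΨ21 : Ψ2 1 = star C * P * C := by
      rw [hΨ2def, LinearMap.sub_apply, LinearMap.smul_apply, hΦ.2, hΨ1, hCPC, hRdef]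
    have hTu : ∀ j, IsUnit (Tv j) := by
      intro j
      fin_cases j
      · simp only [hTvdef, Matrix.cons_val_zero]
        refine ⟨⟨(γ : ℂ) • B, (γ : ℂ)⁻¹ • (↑b⁻¹ : H →L[ℂ] H), ?_, ?_⟩, rfl⟩
        · show ((γ : ℂ) • B) * ((γ : ℂ)⁻¹ • (↑b⁻¹ : H →L[ℂ] H)) = 1
          rw [smul_mul_assoc, mul_smul_comm, smul_smul, ← hb, Units.mul_inv,
            mul_inv_cancel₀ hγne, one_smul]
        · show ((γ : ℂ)⁻¹ • (↑b⁻¹ : H →L[ℂ] H)) * ((γ : ℂ) • B) = 1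
          rw [smul_mul_assoc, mul_smul_comm, smul_smul, ← hb, Units.inv_mul,
            inv_mul_cancel₀ hγne, one_smul]
      · simp only [hTvdef, Matrix.cons_val_one, Matrix.head_cons]
        exact ⟨cu, hcu⟩
    have hmem : ∀ j, Φs j ∈ CPP (A := A) P := by
      intro j
      fin_cases j
      · simp only [hΦsdef, Matrix.cons_val_zero]
        constructor
        · exact hΨcp.conjCP _
        · show (conjAd (↑b⁻¹ : H →L[ℂ] H)) (Ψ 1) = P
          rw [hΨ1, hQ0def, ← hb, conjAd_apply]
          exact unit_conj_cancel b P
      · simp only [hΦsdef, Matrix.cons_val_one, Matrix.head_cons]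
        constructor
        · refine IsCPMap.conjCP ?_ _
          have hc' : ((2 : ℂ)⁻¹) = (((2 : ℝ)⁻¹ : ℝ) : ℂ) := by norm_num
          have hsplit : Ψ2 = (Φ - Ψ) + (((2 : ℝ)⁻¹ : ℝ) : ℂ) • Ψ := by
            rw [hΨ2def, ← hc']
            module
          rw [hsplit]
          exact hdiffcp.addCP (IsCPMap.smulCP _ (by norm_num) hΨcp)
        · show (conjAd (↑cu⁻¹ : H →L[ℂ] H)) (Ψ2 1) = P
          rw [hΨ21, ← hcu, conjAd_apply]
          exact unit_conj_cancel cu P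
    have hsum : (∑ j, star (Tv j) * P * Tv j) = P := by
      rw [Fin.sum_univ_two]
      simp only [hTvdef, Matrix.cons_val_zero, Matrix.cons_val_one, Matrix.head_cons]
      have hsmul : star ((γ : ℂ) • B) * P * ((γ : ℂ) • B) = (2 : ℂ)⁻¹ • Q0 := by
        rw [star_smul, hstarγ, smul_mul_assoc, smul_mul_assoc, mul_smul_comm, smul_smul,
          hγγ, ← hQ0def]
      rw [hsmul, hCPC, hRdef]
      abel
    have hdecomp : Φ = ∑ j, (conjAd (Tv j)).comp (Φs j) := by
      rw [Fin.sum_univ_two]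
      simp only [hTvdef, hΦsdef, Matrix.cons_val_zero, Matrix.cons_val_one, Matrix.head_cons]
      have ht0 : (conjAd ((γ : ℂ) • B)).comp Φ₁ = (2 : ℂ)⁻¹ • Ψ := by
        refine LinearMap.ext fun a => ?_
        show conjAd ((γ : ℂ) • B) (conjAd (↑b⁻¹ : H →L[ℂ] H) (Ψ a)) = (2 : ℂ)⁻¹ • (Ψ a)
        rw [conjAd_conjAd]
        have hmul : (↑b⁻¹ : H →L[ℂ] H) * ((γ : ℂ) • B) = (γ : ℂ) • 1 := by
          rw [mul_smul_comm, ← hb, Units.inv_mul]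
        rw [hmul, conjAd_apply, star_smul, hstarγ, star_one, smul_mul_assoc, smul_mul_assoc,
          mul_smul_comm, smul_smul, hγγ, one_mul, mul_one]
      have ht1 : (conjAd C).comp Φ₂ = Ψ2 := by
        refine LinearMap.ext fun a => ?_
        show conjAd C (conjAd (↑cu⁻¹ : H →L[ℂ] H) (Ψ2 a)) = Ψ2 a
        rw [conjAd_conjAd]
        have hmul : (↑cu⁻¹ : H →L[ℂ] H) * C = 1 := by rw [← hcu, Units.inv_mul]
        rw [hmul, conjAd_apply, star_one, one_mul, mul_one]
      rw [ht0, ht1, hΨ2def]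
      abel
    obtain ⟨Sm, hSu, hSeq⟩ := hext.2 2 Tv Φs hTu hmem hsum hdecomp 0
    have hSeq' : Φ₁ = (conjAd Sm).comp Φ := by
      rw [← hSeq]
      simp only [hΦsdef, Matrix.cons_val_zero]
    refine ⟨Sm * B, hSu.mul (by rw [← hb]; exact b.isUnit), ?_⟩
    refine LinearMap.ext fun a => ?_
    show Ψ a = conjAd (Sm * B) (Φ a)
    have h1 : conjAd (↑b⁻¹ : H →L[ℂ] H) (Ψ a) = conjAd Sm (Φ a) := LinearMap.congr_fun hSeq' a
    have h2 := congrArg (conjAd (↑b : H →L[ℂ] H)) h1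
    rw [conjAd_conjAd, conjAd_conjAd, Units.inv_mul] at h2
    rw [conjAd_apply, star_one, one_mul, mul_one] at h2
    rw [h2, hb]
  · -- (ii) → (i)
    intro hcond
    refine ⟨hΦ, ?_⟩
    intro n T Φs hTu hmemC hsum hdecomp j
    set F : Fin n → (A →ₗ[ℂ] (H →L[ℂ] H)) := fun k => (conjAd (T k)).comp (Φs k) with hF
    have hΨcp : IsCPMap (F j) := (hmemC j).1.conjCP (T j)
    have hdiffcp : IsCPMap (Φ - F j) := by
      have hsplit : Φ - F j = ∑ k ∈ Finset.univ.erase j, F k := by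
        rw [hdecomp, ← Finset.add_sum_erase _ F (Finset.mem_univ j)]
        abel
      rw [hsplit]
      exact isCPMap_finsetSum _ _ (fun k _ => (hmemC k).1.conjCP (T k))
    have hF1 : (F j) 1 = star (T j) * P * (T j) := by
      show conjAd (T j) (Φs j 1) = star (T j) * P * (T j)
      rw [(hmemC j).2, conjAd_apply]
    obtain ⟨Z, hZu, hZ⟩ := hcond (F j) hΨcp hdiffcp ⟨T j, hTu j, hF1⟩
    obtain ⟨t, ht⟩ := hTu j
    refine ⟨Z * ↑t⁻¹, hZu.mul (t⁻¹ : (H →L[ℂ] H)ˣ).isUnit, ?_⟩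
    refine LinearMap.ext fun a => ?_
    have h1 := LinearMap.congr_fun hZ a
    simp only [hF, LinearMap.comp_apply] at h1
    have h2 := congrArg (conjAd (↑t⁻¹ : H →L[ℂ] H)) h1
    rw [conjAd_conjAd, conjAd_conjAd, ← ht, Units.mul_inv] at h2
    rw [conjAd_apply, star_one, one_mul, mul_one] at h2
    simp only [LinearMap.comp_apply]
    exact h2


end
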